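/- Let (N₁, N₂) be a regular index pair (continuous inner exit time T_i), and for an interval γ = [d−h, d] ⊂ ℝ⁺ define H : [0,1] × N₁(γ) → N₁(γ) by H(λ, (d−t, x)) := (d−t, x) χ (λ t) if λ t ≤ T_i(x) and (d−t, x) χ T_i(x) otherwise. Then H is continuous, H(0, ·) = id, H fixes N₂(γ) pointwise, and H(1, ·) maps N₁(γ) into N₁'(γ) := N₁({d}) ∪ N₂(γ); hence (N₁'(γ), N₂(γ)) is a strong deformation retract of (N₁(γ), N₂(γ)). -/

import Mathlib

open Set

/-- The homotopy `H(λ, (d−t, x)) = (d−t,x) χ (λ t)` if `λ t ≤ T_i(x)`, and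
`(d−t,x) χ T_i(x)` otherwise; here `t = d - z.1`. -/
noncomputable def retractH {X : Type*} (χ : ℝ → (ℝ × X) → (ℝ × X))
    (T : (ℝ × X) → ℝ) (d : ℝ) (lam : ℝ) (z : ℝ × X) : ℝ × X :=
  if lam * (d - z.1) ≤ T z then χ (lam * (d - z.1)) z else χ (T z) z

theorem stmt19 {X : Type*} [MetricSpace X]
    (χ : ℝ → (ℝ × X) → (ℝ × X))
    (hcont : Continuous fun p : ℝ × (ℝ × X) => χ p.1 p.2)
    (hzero : ∀ z, χ 0 z = z)
    (hsemi : ∀ s t : ℝ, 0 ≤ s → 0 ≤ t → ∀ z, χ s (χ t z) = χ (s + t) z)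
    -- the time component advances at unit speed
    (hfst : ∀ t : ℝ, 0 ≤ t → ∀ z : ℝ × X, (χ t z).1 = z.1 + t)
    (N₁ N₂ : Set (ℝ × X)) (hsub : N₂ ⊆ N₁) (h₁ : IsClosed N₁) (h₂ : IsClosed N₂)
    -- N₂ is positively invariant relative to N₁
    (hposinv : ∀ z ∈ N₂, ∀ t : ℝ, 0 ≤ t →
      (∀ s ∈ Icc (0:ℝ) t, χ s z ∈ N₁) → χ t z ∈ N₂)
    -- the inner exit time T_i, continuous (regularity) and finite
    (T : (ℝ × X) → ℝ)
    (hTdef : ∀ z ∈ N₁, IsLUB {t : ℝ | 0 ≤ t ∧ ∀ s ∈ Icc 0 t, χ s z ∈ N₁ \ N₂} (T z) ∨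
      (z ∈ N₂ ∧ T z = 0))
    (hTnonneg : ∀ z ∈ N₁, 0 ≤ T z)
    (hTcont : ContinuousOn T N₁)
    (hT0 : ∀ z ∈ N₂, T z = 0)
    (horbit : ∀ z ∈ N₁, ∀ s ∈ Icc 0 (T z), χ s z ∈ N₁)
    (hexit : ∀ z ∈ N₁, χ (T z) z ∈ N₂)
    -- the interval γ = [d − h, d]
    (d h : ℝ) (hh : 0 < h) (hdh : 0 ≤ d - h) :
    ContinuousOn (fun p : ℝ × (ℝ × X) => retractH χ T d p.1 p.2)
      (Icc 0 1 ×ˢ (N₁ ∩ {z | z.1 ∈ Icc (d - h) d})) ∧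
    (∀ z ∈ N₁ ∩ {z : ℝ × X | z.1 ∈ Icc (d - h) d}, retractH χ T d 0 z = z) ∧
    (∀ lam ∈ Icc (0:ℝ) 1, ∀ z ∈ N₁ ∩ {z : ℝ × X | z.1 ∈ Icc (d - h) d},
      retractH χ T d lam z ∈ N₁ ∩ {z : ℝ × X | z.1 ∈ Icc (d - h) d}) ∧
    (∀ lam ∈ Icc (0:ℝ) 1, ∀ z ∈ N₂ ∩ {z : ℝ × X | z.1 ∈ Icc (d - h) d},
      retractH χ T d lam z = z) ∧
    (∀ z ∈ N₁ ∩ {z : ℝ × X | z.1 ∈ Icc (d - h) d},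
      (retractH χ T d 1 z).1 = d ∨ retractH χ T d 1 z ∈ N₂) := by
  have hmin : ∀ lam (z : ℝ × X), retractH χ T d lam z = χ (min (lam * (d - z.1)) (T z)) z := by
    intro lam z
    rw [retractH, min_def]
    split <;> rfl
  refine ⟨?_, ?_, ?_, ?_, ?_⟩
  · have hc : ContinuousOn (fun p : ℝ × (ℝ × X) => χ (min (p.1 * (d - p.2.1)) (T p.2)) p.2)
        (Icc 0 1 ×ˢ (N₁ ∩ {z | z.1 ∈ Icc (d - h) d})) := by
      have hpair : ContinuousOn
          (fun p : ℝ × (ℝ × X) => (min (p.1 * (d - p.2.1)) (T p.2), p.2))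
          (Icc 0 1 ×ˢ (N₁ ∩ {z | z.1 ∈ Icc (d - h) d})) := by
        apply ContinuousOn.prodMk
        · exact continuous_min.continuousOn.comp
            (((continuous_fst.mul (continuous_const.sub
                (continuous_fst.comp continuous_snd))).continuousOn).prodMk
              (hTcont.comp continuousOn_snd (fun p hp => hp.2.1)))
            (mapsTo_univ _ _)
        · exact continuousOn_snd
      exact hcont.continuousOn.comp hpair (mapsTo_univ _ _)
    exact hc.congr (fun p _ => hmin p.1 p.2)
  · intro z hz
    rw [hmin]
    have : min (0 * (d - z.1)) (T z) = 0 := by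
      rw [zero_mul]
      exact min_eq_left (hTnonneg z hz.1)
    rw [this, hzero]
  · intro lam hlam z hz
    rw [hmin]
    have ht : 0 ≤ d - z.1 := by
      have := hz.2.2
      linarith
    have hs0 : 0 ≤ min (lam * (d - z.1)) (T z) :=
      le_min (mul_nonneg hlam.1 ht) (hTnonneg z hz.1)
    refine ⟨horbit z hz.1 _ ⟨hs0, min_le_right _ _⟩, ?_⟩
    rw [mem_setOf_eq, hfst _ hs0]
    constructor
    · have := hz.2.1
      linarith
    · have h1 : min (lam * (d - z.1)) (T z) ≤ lam * (d - z.1) := min_le_left _ _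
      have h2 : lam * (d - z.1) ≤ 1 * (d - z.1) := mul_le_mul_of_nonneg_right hlam.2 ht
      linarith
  · intro lam hlam z hz
    rw [hmin]
    have ht : 0 ≤ d - z.1 := by
      have := hz.2.2
      linarith
    have : min (lam * (d - z.1)) (T z) = 0 := by
      rw [hT0 z hz.1]
      exact min_eq_right (mul_nonneg hlam.1 ht)
    rw [this, hzero]
  · intro z hz
    rw [hmin, one_mul]
    by_cases hle : d - z.1 ≤ T z
    · left
      rw [min_eq_left hle, hfst _ (by have := hz.2.2; linarith)]
      ring
    · right
      rw [min_eq_right (le_of_not_ge hle)]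
      exact hexit z hz.1
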